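/- Let p be an odd prime, 0 ≤ i ≤ (p-3)/2 and (p-1)/2 ≤ l ≤ p. Then v_{lp + (p+3)/2 + i} ≡ 0 (mod p). -/

import Mathlib

open Polynomial Finset

noncomputable def v (n : ℕ) : ℤ :=
  if n = 0 then -1 else
  ((1 - X) * ∏ j ∈ Finset.range (2 * n - 2),
      (C ((2 * n : ℤ) - 3 - (j : ℤ)) + C (j : ℤ) * X)).coeff (n - 1)

namespace VAux

variable {p : ℕ} [Fact p.Prime]

noncomputable def Sp (p : ℕ) : (ZMod p)[X] := ∑ k ∈ range (p-1), X^k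

lemma master_full : ∏ a : ZMod p, (X - C a) = X ^ p - X := by
  have hp1 : 1 < p := (Fact.out : p.Prime).one_lt
  have h := FiniteField.roots_X_pow_card_sub_X (ZMod p)
  rw [ZMod.card] at h
  have hm : (X ^ p - X : (ZMod p)[X]).Monic := by
    apply monic_X_pow_sub
    simpa using (Nat.cast_lt.mpr hp1 : ((1:ℕ):WithBot ℕ) < p)
  have hcard : ((X ^ p - X : (ZMod p)[X]).roots).card = (X ^ p - X : (ZMod p)[X]).natDegree := by
    rw [h, FiniteField.X_pow_card_sub_X_natDegree_eq (ZMod p) hp1]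
    simpa using (ZMod.card p)
  have := prod_multiset_X_sub_C_of_monic_of_roots_card_eq hm hcard
  rw [h] at this
  rw [← this]
  rfl

lemma master_erase : ∏ a ∈ (univ : Finset (ZMod p)).erase 0, (X - C a) = X ^ (p-1) - 1 := by
  have hp1 : 1 < p := (Fact.out : p.Prime).one_lt
  have hfull := master_full (p := p)
  rw [← Finset.prod_erase_mul _ _ (mem_univ (0 : ZMod p))] at hfull
  have hX : (X - C (0:ZMod p)) = (X : (ZMod p)[X]) := by simp
  rw [hX] at hfull
  apply mul_right_cancel₀ (X_ne_zero : (X : (ZMod p)[X]) ≠ 0)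
  rw [hfull, sub_mul, one_mul, ← pow_succ, Nat.sub_add_cancel hp1.le]

lemma prod_nonzero_neg_one (ho : Odd p) :
    ∏ a ∈ (univ : Finset (ZMod p)).erase 0, a = -1 := by
  obtain ⟨t, ht⟩ := ho
  have := congrArg (Polynomial.eval 0) (master_erase (p := p))
  simp only [eval_sub, eval_pow, eval_X, eval_one, eval_prod, eval_sub, eval_C] at this
  have hp1 : 1 < p := (Fact.out : p.Prime).one_lt
  rw [zero_pow (by omega)] at this
  have h2 : ∏ a ∈ (univ : Finset (ZMod p)).erase 0, (0 - a) =
      (-1:ZMod p)^((univ : Finset (ZMod p)).erase 0).card *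
        ∏ a ∈ (univ : Finset (ZMod p)).erase 0, a := by
    rw [← Finset.prod_const, ← Finset.prod_mul_distrib]
    exact Finset.prod_congr rfl (fun a _ => by ring)
  rw [h2] at this
  have hcard : ((univ : Finset (ZMod p)).erase 0).card = p - 1 := by
    rw [Finset.card_erase_of_mem (mem_univ _), Finset.card_univ, ZMod.card]
  rw [hcard, (by omega : p - 1 = 2 * (p/2)), pow_mul, neg_one_sq, one_pow, one_mul] at this
  rw [this]; ring

lemma prod_nonzero_linear (Y : (ZMod p)[X]) :
    ∏ a ∈ (univ : Finset (ZMod p)).erase 0, (Y - C a) = Y ^ (p-1) - 1 := by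
  have h := congrArg (aeval Y : (ZMod p)[X] →ₐ[ZMod p] (ZMod p)[X]) (master_erase (p := p))
  simpa using h

lemma prod_nonzero_linear_add (Y : (ZMod p)[X]) :
    ∏ a ∈ (univ : Finset (ZMod p)).erase 0, (Y + C a) = Y ^ (p-1) - 1 := by
  rw [← prod_nonzero_linear (p := p) Y]
  apply Finset.prod_nbij' (fun a => -a) (fun a => -a) <;> intros <;>
    simp_all [Finset.mem_erase, sub_neg_eq_add]

lemma block (ho : Odd p) (a : ZMod p) (Y : (ZMod p)[X]) :
    ∏ z : ZMod p, (C a + C z * Y) = C a * (1 - Y ^ (p-1)) := by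
  rcases eq_or_ne a 0 with rfl | ha
  · rw [Finset.prod_eq_zero (mem_univ (0 : ZMod p)) (by simp)]
    simp
  · rw [← Finset.mul_prod_erase univ _ (mem_univ (0 : ZMod p))]
    have h1 : ∀ z ∈ (univ : Finset (ZMod p)).erase 0,
        C a + C z * Y = C z * (Y + C (a * z⁻¹)) := by
      intro z hz
      have hz0 : z ≠ 0 := (Finset.mem_erase.mp hz).1
      rw [mul_add, ← C_mul, mul_comm z, mul_assoc, inv_mul_cancel₀ hz0, mul_one]
      ring
    rw [Finset.prod_congr rfl h1, Finset.prod_mul_distrib]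
    have h2 : ∏ z ∈ (univ : Finset (ZMod p)).erase 0, (C z : (ZMod p)[X]) = C (-1) := by
      rw [← map_prod, prod_nonzero_neg_one ho]
    have h3 : ∏ z ∈ (univ : Finset (ZMod p)).erase 0, (Y + C (a * z⁻¹)) =
        ∏ w ∈ (univ : Finset (ZMod p)).erase 0, (Y + C w) := by
      apply Finset.prod_nbij' (fun z => a * z⁻¹) (fun w => a * w⁻¹) <;> intro x hx <;>
        simp_all [Finset.mem_erase, ha] <;> field_simp
    rw [h2, h3, prod_nonzero_linear_add]
    simp only [C_0, zero_mul, add_zero, map_zero]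
    rw [map_neg, C_1]
    ring

lemma geomS : Sp p * (X - 1) = X ^ (p-1) - 1 := geom_sum_mul X (p-1)

lemma X_sub_one_ne : (X - 1 : (ZMod p)[X]) ≠ 0 := by
  simpa using X_sub_C_ne_zero (1 : ZMod p)

lemma block_S (ho : Odd p) (a : ZMod p) :
    ∏ z : ZMod p, (C a + C z * (X - 1)) = -(C a) * X * Sp p := by
  rw [block ho]
  apply mul_left_cancel₀ (X_sub_one_ne (p := p))
  have hc : (X - 1 : (ZMod p)[X]) ^ p = X ^ p - 1 := by
    rw [sub_pow_char, one_pow]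
  have hp1 : 1 ≤ p := (Fact.out : p.Prime).pos
  have hX : (X : (ZMod p)[X]) * X ^ (p-1) = X ^ p := by
    rw [← pow_succ']; congr 1; omega
  have hZ : ((X:(ZMod p)[X]) - 1) ^ (p-1) * (X - 1) = (X - 1) ^ p := by
    rw [← pow_succ]; congr 1; omega
  calc (X - 1) * (C a * (1 - (X-1)^(p-1)))
      = C a * ((X - 1) - (X-1)^p) := by rw [← hZ]; ring
    _ = C a * (X - X^p) := by rw [hc]; ring
    _ = -(C a) * X * (X^(p-1) - 1) := by rw [← hX]; ring
    _ = (X - 1) * (-(C a) * X * Sp p) := by rw [← geomS]; ring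

lemma Sp_pow_p : (Sp p) ^ p = ∑ k ∈ range (p-1), X ^ (k * p) := by
  rw [Sp, sum_pow_char]
  exact Finset.sum_congr rfl fun k _ => by rw [← pow_mul]

lemma one_sub_X_mul_S : (1 - X : (ZMod p)[X]) * Sp p = 1 - X ^ (p-1) := by
  linear_combination -geomS (p := p)

lemma Sp_pow_mul : (Sp p) ^ p * ((X:(ZMod p)[X]) ^ p - 1) = X ^ (p*(p-1)) - 1 := by
  have h1 : ((X:(ZMod p)[X]) - 1) ^ p = X ^ p - 1 := by rw [sub_pow_char, one_pow]
  calc (Sp p) ^ p * ((X:(ZMod p)[X])^p - 1) = (Sp p * (X - 1)) ^ p := by rw [mul_pow, h1]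
    _ = (X ^ (p-1) - 1) ^ p := by rw [geomS]
    _ = X ^ (p*(p-1)) - 1 := by rw [sub_pow_char, one_pow, ← pow_mul, mul_comm (p-1)]

lemma Q_exists (s : ℕ) : ∃ Q : (ZMod p)[X],
    (1 - X) * (Sp p * X) ^ s = C ((-1:ZMod p)^s) * (1 - X) + ((X:(ZMod p)[X])^p - 1) * Q := by
  have hp1 : 1 ≤ p := (Fact.out : p.Prime).pos
  induction s with
  | zero => exact ⟨0, by simp⟩
  | succ s ih =>
    obtain ⟨Q, hQ⟩ := ih
    refine ⟨Sp p * X * Q - C ((-1:ZMod p)^s), ?_⟩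
    have hX : (X:(ZMod p)[X])^(p-1) * X = X^p := by rw [← pow_succ]; congr 1; omega
    have key : (1 - X : (ZMod p)[X]) * (Sp p * X) = -(1 - X) - (X^p - 1) := by
      linear_combination X * one_sub_X_mul_S (p := p) - hX
    calc (1-X) * (Sp p * X) ^ (s+1)
        = (Sp p * X) * ((1-X) * (Sp p * X)^s) := by ring
      _ = (Sp p * X) * (C ((-1:ZMod p)^s) * (1-X) + ((X:(ZMod p)[X])^p-1)*Q) := by rw [hQ]
      _ = C ((-1:ZMod p)^s) * ((1-X) * (Sp p * X))
            + ((X:(ZMod p)[X])^p-1)*(Sp p * X * Q) := by ring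
      _ = C ((-1:ZMod p)^(s+1)) * (1-X)
            + ((X:(ZMod p)[X])^p-1)*(Sp p * X * Q - C ((-1:ZMod p)^s)) := by
          rw [key]
          simp only [pow_succ, map_mul, map_neg, map_one, map_pow]
          ring

lemma prod_range_cast (f : ZMod p → (ZMod p)[X]) :
    ∏ j ∈ range p, f (j : ZMod p) = ∏ z : ZMod p, f z := by
  refine Finset.prod_nbij (i := fun j => (j : ZMod p)) ?_ ?_ ?_ ?_
  · intro a _; exact mem_univ _
  · intro a ha b hb hab
    simp only [Finset.coe_range, Set.mem_Iio] at ha hb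
    simp only at hab
    rw [← ZMod.val_cast_of_lt ha, ← ZMod.val_cast_of_lt hb, hab]
  · intro z _
    refine ⟨z.val, ?_, ?_⟩
    · simp [ZMod.val_lt z]
    · simp [ZMod.natCast_val, ZMod.cast_id]
  · intros; rfl

lemma prod_blocks (g : ℕ → (ZMod p)[X]) (hper : ∀ k j, g (k*p + j) = g j) (B : ℕ) :
    ∏ j ∈ range (B*p), g j = (∏ j ∈ range p, g j)^B := by
  induction B with
  | zero => simp
  | succ B ih =>
    rw [show (B+1)*p = B*p + p by ring, Finset.prod_range_add, ih, pow_succ]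
    congr 1
    exact Finset.prod_congr rfl fun r _ => hper B r

lemma deg_T (A : ZMod p) (m : ℕ) :
    (∏ r ∈ range (m+1), (C (A - (r:ZMod p)) + C ((r:ℕ):ZMod p) * X)).natDegree ≤ m := by
  rw [Finset.prod_range_succ']
  have h3 : (C (A - ((0:ℕ):ZMod p)) + C ((0:ℕ):ZMod p) * X).natDegree = 0 := by simp
  have h4 : (∏ k ∈ range m,
      (C (A - ((k+1:ℕ):ZMod p)) + C ((k+1:ℕ):ZMod p) * X)).natDegree ≤ m := by
    apply le_trans (natDegree_prod_le _ _)
    calc ∑ k ∈ range m, (C (A - ((k+1:ℕ):ZMod p)) + C ((k+1:ℕ):ZMod p) * X).natDegree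
        ≤ ∑ _k ∈ range m, 1 := by
          apply Finset.sum_le_sum
          intro r _
          apply le_trans (natDegree_add_le _ _)
          have : (C ((r+1:ℕ):ZMod p) * X).natDegree ≤ 1 :=
            le_trans (natDegree_C_mul_le _ _) (by simp)
          simp only [natDegree_C]
          omega
      _ = m := by simp
  apply le_trans (natDegree_mul_le)
  omega

lemma deg_one_sub_X : (1 - X : (ZMod p)[X]).natDegree ≤ 1 := by
  apply le_trans (natDegree_sub_le _ _); simp

lemma deg_Sp : (Sp p).natDegree ≤ p - 2 := by
  apply natDegree_sum_le_of_forall_le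
  intro k hk
  simp only [natDegree_X_pow]
  exact Nat.le_pred_of_lt (Finset.mem_range.mp hk)

end VAux
open VAux

set_option maxHeartbeats 1000000 in
theorem v_zero_block (p i l : ℕ) (hp : p.Prime) (hodd : Odd p)
    (hi : i ≤ (p - 3) / 2) (hl1 : (p - 1) / 2 ≤ l) (hl2 : l ≤ p) :
    v (l * p + (p + 3) / 2 + i) ≡ 0 [ZMOD (p : ℤ)] := by
  haveI : Fact p.Prime := ⟨hp⟩
  obtain ⟨t, ht⟩ := id hodd
  have ht1 : 1 ≤ t := by have := hp.two_le; omega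
  have h32 : (p+3)/2 = t + 2 := by omega
  rw [h32]
  have hit : i + 1 ≤ t := by
    have h30 : (p-3)/2 = t - 1 := by omega
    omega
  have hl1t : t ≤ l := by
    have h12 : (p-1)/2 = t := by omega
    omega
  set n := l * p + (t + 2) + i with hn
  have hlp3 : l * 3 ≤ l * p := Nat.mul_le_mul_left l (by omega)
  have hn0 : ¬ (n = 0) := by omega
  rw [Int.modEq_zero_iff_dvd]
  unfold v
  rw [if_neg hn0, ← ZMod.intCast_zmod_eq_zero_iff_dvd]
  set A : ZMod p := ((2*i : ℕ) : ZMod p) with hA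
  set g : ℕ → (ZMod p)[X] := fun j => C (A - (j:ZMod p)) + C ((j:ℕ):ZMod p) * X with hg
  have e1 : (2*l+1)*p = 2*(l*p) + p := by ring
  have h2n2 : 2*n - 2 = (2*l+1)*p + (2*i+1) := by omega
  have h2n : (2*n : ℕ) = (2*l+1)*p + (2*i+3) := by omega
  -- reduce to ZMod p coefficient
  have hcast : ((((1 - X) * ∏ j ∈ Finset.range (2 * n - 2),
      (C ((2 * n : ℤ) - 3 - (j : ℤ)) + C (j : ℤ) * X)).coeff (n - 1) : ℤ) : ZMod p)
      = (((1 - X) * ∏ j ∈ Finset.range (2 * n - 2),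
          (C ((2 * n : ℤ) - 3 - (j : ℤ)) + C (j : ℤ) * X)).map
            (Int.castRingHom (ZMod p))).coeff (n - 1) := by
    rw [coeff_map]; rfl
  rw [hcast]
  have hmapped : ((1 - X) * ∏ j ∈ Finset.range (2 * n - 2),
      (C ((2 * n : ℤ) - 3 - (j : ℤ)) + C (j : ℤ) * X)).map (Int.castRingHom (ZMod p))
      = (1 - X) * ∏ j ∈ range (2*n-2), g j := by
    rw [Polynomial.map_mul, Polynomial.map_sub, Polynomial.map_one, Polynomial.map_X,
      Polynomial.map_prod]
    congr 1
    refine Finset.prod_congr rfl fun j _ => ?_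
    rw [Polynomial.map_add, Polynomial.map_mul, map_C, map_C, Polynomial.map_X]
    have h2nz : ((2*n : ℕ) : ZMod p) = 2*(i:ZMod p)+3 := by
      rw [h2n]; push_cast [ZMod.natCast_self]; ring
    have hcoef : ((Int.castRingHom (ZMod p)) ((2*n:ℤ) - 3 - (j:ℤ))) = A - (j : ZMod p) := by
      show (((2*(n:ℤ)) - 3 - (j:ℤ) : ℤ) : ZMod p) = A - (j:ZMod p)
      push_cast at h2nz ⊢
      rw [hA]
      push_cast
      linear_combination h2nz
    rw [hcoef]
    norm_num [hg]
  rw [hmapped]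
  have hper : ∀ k j, g (k*p + j) = g j := by
    intro k j
    have hc : ((k*p + j : ℕ) : ZMod p) = (j : ZMod p) := by
      push_cast [ZMod.natCast_self]; ring
    simp only [hg, hc]
  set T : (ZMod p)[X] := ∏ r ∈ range (2*i+1), g r with hT
  have hsplit : ∏ j ∈ range (2*n-2), g j = (∏ j ∈ range p, g j)^(2*l+1) * T := by
    rw [h2n2, Finset.prod_range_add, prod_blocks g hper]
    congr 1
    exact Finset.prod_congr rfl fun r _ => hper (2*l+1) r
  have hblockval : ∏ j ∈ range p, g j = -(C A) * X * Sp p := by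
    have hgj : ∀ j : ℕ, g j = (fun z : ZMod p => C A + C z * (X - 1)) ((j : ZMod p)) := by
      intro j; simp only [hg]; rw [map_sub]; ring
    rw [Finset.prod_congr rfl fun j _ => hgj j]
    exact (prod_range_cast (fun z => C A + C z * (X - 1))).trans (block_S hodd A)
  set V : (ZMod p)[X] := (1-X) * (Sp p)^(2*l+1) * T with hV
  have hform : (1 - X : (ZMod p)[X]) * ∏ j ∈ range (2*n-2), g j
      = C (-(A^(2*l+1))) * (X^(2*l+1) * V) := by
    rw [hsplit, hblockval, hV]
    rw [show -(C A) * X * Sp p = -((C A) * (X * Sp p)) by ring]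
    rw [Odd.neg_pow ⟨l, by ring⟩, mul_pow, mul_pow, ← map_pow, map_neg]
    ring
  rw [hform]
  set M : ℕ := l*p + t + i - 2*l with hM
  have hMn : M + (2*l+1) = n - 1 := by omega
  rw [coeff_C_mul, ← hMn, coeff_X_pow_mul]
  suffices hVM : V.coeff M = 0 by rw [hVM, mul_zero]
  -- core
  set σ := 2*(l - t) with hσdef
  have hσ : 2*l+1 = p + σ := by omega
  obtain ⟨Q, hQ⟩ := Q_exists (p := p) σ
  rw [Even.neg_one_pow ⟨l - t, by omega⟩, map_one, one_mul] at hQ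
  have hdT : T.natDegree ≤ 2*i := deg_T A (2*i)
  have hXV : X^σ * V = (Sp p)^p * ((1-X)*T) + ((X:(ZMod p)[X])^(p*(p-1)) - 1) * (Q*T) := by
    have h1 : X^σ * V = (Sp p)^p * (((1-X) * (Sp p * X)^σ) * T) := by
      rw [hV, hσ, pow_add, mul_pow]; ring
    rw [h1, hQ]
    calc (Sp p)^p * (((1-X) + ((X:(ZMod p)[X])^p - 1)*Q) * T)
        = (Sp p)^p * ((1-X)*T) + ((Sp p)^p * ((X:(ZMod p)[X])^p - 1)) * (Q*T) := by ring
      _ = _ := by rw [Sp_pow_mul]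
  have hVMc : V.coeff M = (X^σ * V).coeff (M + σ) := (coeff_X_pow_mul V σ M).symm
  set E := M + σ with hEdef
  have e2 : (l-1)*p + p = l*p := by
    rw [Nat.sub_one_mul]
    have : 1*p ≤ l*p := Nat.mul_le_mul_right p (by omega)
    omega
  have hE : E = (l-1)*p + (t+1+i) := by omega
  rw [hVMc, hXV, coeff_add]
  have termA : ((Sp p)^p * ((1-X)*T)).coeff E = 0 := by
    rw [Sp_pow_p, Finset.sum_mul, finset_sum_coeff]
    apply Finset.sum_eq_zero
    intro k _
    rw [mul_comm, coeff_mul_X_pow']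
    split_ifs with hkE
    · apply coeff_eq_zero_of_natDegree_lt
      have hdeg : ((1-X)*T).natDegree ≤ 2*i+1 := by
        apply le_trans (natDegree_mul_le)
        have := deg_one_sub_X (p := p)
        omega
      set jj := E - k*p with hjj
      rcases Nat.lt_or_ge (2*i+1) jj with h | h
      · omega
      · exfalso
        have hj1 : jj + k*p = E := by omega
        have hj2 : jj % p = (t+1+i) % p := by
          calc jj % p = (jj + k*p) % p := (Nat.add_mul_mod_self_right jj k p).symm
            _ = ((t+1+i) + (l-1)*p) % p := by rw [hj1, hE]; ring_nf
            _ = (t+1+i) % p := Nat.add_mul_mod_self_right (t+1+i) (l-1) p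
        have hj3 : (t+1+i) % p = t+1+i := Nat.mod_eq_of_lt (by omega)
        have hj4 : jj % p = jj := Nat.mod_eq_of_lt (by omega)
        omega
    · rfl
  have hdQ : Q = 0 ∨ Q.natDegree + p ≤ σ*(p-1) + 1 := by
    rcases eq_or_ne Q 0 with h | hQ0
    · exact Or.inl h
    right
    have hne : ((X:(ZMod p)[X])^p - 1) ≠ 0 := by
      have := X_pow_sub_C_ne_zero (R := ZMod p) (n := p) hp.pos (1 : ZMod p)
      simpa using this
    have hdmul : (((X:(ZMod p)[X])^p - 1) * Q).natDegree = p + Q.natDegree := by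
      rw [natDegree_mul hne hQ0]
      congr 1
      have : ((X:(ZMod p)[X])^p - 1) = X^p - C 1 := by rw [map_one]
      rw [this, natDegree_X_pow_sub_C]
    have hrhs : (((X:(ZMod p)[X])^p - 1) * Q) = (1-X)*(Sp p * X)^σ - (1-X) := by
      linear_combination -hQ
    have hdSpX : (Sp p * X).natDegree ≤ p - 1 := by
      apply le_trans (natDegree_mul_le)
      have := deg_Sp (p := p)
      have hp2 : 2 ≤ p := hp.two_le
      simp only [natDegree_X]
      omega
    have hdpow : ((Sp p * X)^σ).natDegree ≤ σ*(p-1) :=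
      le_trans (natDegree_pow_le) (Nat.mul_le_mul_left σ hdSpX)
    have hd1 : ((1-X) * (Sp p * X)^σ).natDegree ≤ σ*(p-1) + 1 := by
      apply le_trans (natDegree_mul_le)
      have := deg_one_sub_X (p := p)
      omega
    have hd2 : ((1-X)*(Sp p * X)^σ - (1-X)).natDegree ≤ σ*(p-1) + 1 := by
      apply le_trans (natDegree_sub_le _ _)
      have := deg_one_sub_X (p := p)
      omega
    rw [hrhs] at hdmul
    omega
  have hQTE : ∀ d : ℕ, (l-1)*p + (t+1+i) ≤ d → (Q*T).coeff d = 0 := by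
    intro d hd
    rcases hdQ with h0 | hb
    · rw [h0, zero_mul, coeff_zero]
    · apply coeff_eq_zero_of_natDegree_lt
      apply lt_of_le_of_lt (natDegree_mul_le)
      have hL1 : 1 ≤ l - t := by
        rcases Nat.eq_zero_or_pos (l - t) with h0 | h1
        · exfalso
          have hσ0 : σ = 0 := by omega
          rw [hσ0] at hb
          simp only [zero_mul] at hb
          have := hp.two_le
          omega
        · exact h1
      have key : Q.natDegree + 2*i < (l-1)*p + (t+1+i) := by
        have hc1 : ((l-1)*p : ℤ) = ((l:ℤ)-1)*(2*(t:ℤ)+1) := by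
          push_cast [Nat.cast_sub (show 1 ≤ l by omega)]
          rw [ht]; push_cast; ring
        have hc2 : ((σ*(p-1) : ℕ) : ℤ) = 2*((l:ℤ)-(t:ℤ))*(2*(t:ℤ)) := by
          rw [hσdef]
          push_cast [Nat.cast_sub (show t ≤ l by omega), Nat.cast_sub (show 1 ≤ p by omega)]
          rw [ht]; push_cast; ring
        have hbz : (Q.natDegree : ℤ) + (2*(t:ℤ)+1) ≤ 2*((l:ℤ)-(t:ℤ))*(2*(t:ℤ)) + 1 := by
          have := hb
          zify at this
          rw [← hc2]
          push_cast
          omega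
        have hiz : (i:ℤ) + 1 ≤ (t:ℤ) := by exact_mod_cast hit
        have hlz : (l:ℤ) ≤ 2*(t:ℤ)+1 := by
          have : (l:ℤ) ≤ (p:ℤ) := by exact_mod_cast hl2
          rw [ht] at this; push_cast at this; omega
        have hLz : (t:ℤ)+1 ≤ (l:ℤ) := by
          have : (t:ℤ) + 1 ≤ (l:ℤ) := by exact_mod_cast (show t + 1 ≤ l by omega)
          exact this
        have htz : (1:ℤ) ≤ (t:ℤ) := by exact_mod_cast ht1
        have hgoal : (Q.natDegree : ℤ) + 2*(i:ℤ) < ((l:ℤ)-1)*(2*(t:ℤ)+1) + ((t:ℤ)+1+(i:ℤ)) := by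
          nlinarith [mul_nonneg (by linarith : (0:ℤ) ≤ 2*(t:ℤ)+1-(l:ℤ))
            (by linarith : (0:ℤ) ≤ 2*(t:ℤ)-1), Int.natCast_nonneg i, Int.natCast_nonneg Q.natDegree]
        zify [show 1 ≤ l by omega]
        rw [hc1]
        push_cast at hgoal ⊢
        linarith
      omega
  have termC : (Q*T).coeff E = 0 := hQTE E (by omega)
  have termB : ((X:(ZMod p)[X])^(p*(p-1)) * (Q*T)).coeff E = 0 := by
    rw [mul_comm, coeff_mul_X_pow']
    split_ifs with hbig
    · -- forces l = p
      have htip : t+1+i < p := by omega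
      have hlp' : l = p := by
        by_contra hne
        have hl' : l ≤ p - 1 := by omega
        have hmono : (l-1)*p ≤ (p-2)*p := Nat.mul_le_mul_right p (by omega)
        have e3 : (p-1)*p = (p-2)*p + p := by
          rw [show p-1 = (p-2)+1 by omega, add_one_mul]
        have e4 : p*(p-1) = (p-1)*p := Nat.mul_comm p (p-1)
        omega
      have hidx : E - p*(p-1) = t+1+i := by
        have e4 : p*(p-1) = (p-1)*p := Nat.mul_comm p (p-1)
        have e5 : (l-1)*p = (p-1)*p := by rw [hlp']
        omega
      rw [hidx, coeff_mul]
      apply Finset.sum_eq_zero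
      rintro ⟨u, w⟩ huv
      rw [Finset.HasAntidiagonal.mem_antidiagonal] at huv
      rcases Nat.lt_or_ge (2*i) w with hw | hw
      · have hTw : T.coeff w = 0 := coeff_eq_zero_of_natDegree_lt (lt_of_le_of_lt hdT hw)
        show Q.coeff u * T.coeff w = 0
        rw [hTw, mul_zero]
      · have hu2 : 2 ≤ u := by omega
        have hup : u < p := by omega
        have huσ : u < σ := by omega
        have hQu : Q.coeff u = 0 := by
          have h1X : (1-X : (ZMod p)[X]).coeff u = 0 := by
            rw [coeff_sub, coeff_one, coeff_X, if_neg (by omega), if_neg (by omega)]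
            ring
          have hXpQ : (((X:(ZMod p)[X])^p - 1) * Q).coeff u = - Q.coeff u := by
            rw [sub_mul, one_mul, coeff_sub, mul_comm, coeff_mul_X_pow', if_neg (by omega)]
            ring
          have hL : ((1-X) * (Sp p * X)^σ).coeff u = 0 := by
            have hrw : (1-X) * (Sp p * X)^σ = ((1-X) * (Sp p)^σ) * X^σ := by
              rw [mul_pow]; ring
            rw [hrw, coeff_mul_X_pow', if_neg (by omega)]
          have hcoeffQ : ((1-X) * (Sp p * X)^σ).coeff u
              = (1-X:(ZMod p)[X]).coeff u + (((X:(ZMod p)[X])^p - 1)*Q).coeff u := by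
            rw [hQ, coeff_add]
          rw [hL, h1X, hXpQ] at hcoeffQ
          linear_combination hcoeffQ
        show Q.coeff u * T.coeff w = 0
        rw [hQu, zero_mul]
    · rfl
  have termBC : (((X:(ZMod p)[X])^(p*(p-1)) - 1) * (Q*T)).coeff E = 0 := by
    rw [sub_mul, one_mul, coeff_sub, termB, termC, sub_zero]
  rw [termA, termBC, add_zero]
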